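/- Let (Ω, 𝓕) be a measurable space and let c : 𝓕 → [0,1] be a monotone, normalized set function (c(∅) = 0, c(Ω) = 1, and A ⊆ B implies c(A) ≤ c(B)). Then c is submodular (i.e. c(A ∪ B) + c(A ∩ B) ≤ c(A) + c(B) for all A, B ∈ 𝓕) if and only if the Choquet integral with respect to c is convex on the space 𝓧 of bounded Borel-measurable real-valued functions on Ω: for all X, Y ∈ 𝓧 and all λ ∈ [0,1], ∫(λX + (1−λ)Y) dc ≤ λ ∫X dc + (1−λ) ∫Y dc. -/

import Mathlib

open MeasureTheory Set

/-- The Choquet integral of `X` with respect to the set function `c`: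
`∫ X dc = ∫_{-∞}^0 (c(X > x) - 1) dx + ∫_0^∞ c(X > x) dx`. -/
noncomputable def choquet {Ω : Type*} [MeasurableSpace Ω] (c : Set Ω → ℝ) (X : Ω → ℝ) : ℝ :=
  (∫ x in Set.Iio (0 : ℝ), (c {ω | x < X ω} - 1)) + ∫ x in Set.Ioi (0 : ℝ), c {ω | x < X ω}

set_option maxHeartbeats 1000000
open scoped Classical

section Aux

variable {Ω : Type*} [MeasurableSpace Ω]
variable {c : Set Ω → ℝ}
variable (hc_mono : ∀ ⦃A B : Set Ω⦄, MeasurableSet A → MeasurableSet B → A ⊆ B → c A ≤ c B)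
    (hc_range : ∀ A : Set Ω, MeasurableSet A → c A ∈ Set.Icc (0 : ℝ) 1)
    (hc_empty : c ∅ = 0) (hc_univ : c Set.univ = 1)

lemma mble {X : Ω → ℝ} (hX : Measurable X) (x : ℝ) : MeasurableSet {ω | x < X ω} :=
  hX measurableSet_Ioi

include hc_mono in
lemma antitone_G {X : Ω → ℝ} (hX : Measurable X) :
    Antitone (fun x => c {ω | x < X ω}) := fun x y hxy =>
  hc_mono (mble hX y) (mble hX x) (fun _ h => lt_of_le_of_lt hxy h)

include hc_univ in
lemma G_one {X : Ω → ℝ} {M : ℝ} (hXM : ∀ ω, |X ω| ≤ M) {x : ℝ} (hx : x < -M) :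
    c {ω | x < X ω} = 1 := by
  have : {ω | x < X ω} = univ := eq_univ_of_forall fun ω =>
    lt_of_lt_of_le hx (neg_le_of_abs_le (hXM ω))
  rw [this, hc_univ]

include hc_empty in
lemma G_zero {X : Ω → ℝ} {M : ℝ} (hXM : ∀ ω, |X ω| ≤ M) {x : ℝ} (hx : M ≤ x) :
    c {ω | x < X ω} = 0 := by
  have : {ω | x < X ω} = ∅ := eq_empty_of_forall_notMem fun ω h =>
    absurd (lt_of_le_of_lt hx h) (not_lt.mpr (le_of_abs_le (hXM ω)))
  rw [this, hc_empty]

include hc_mono hc_univ hc_empty in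
/-- Key representation: for `p ≤ -M ≤ M ≤ q`, `∫_p^q c{X>x} dx = choquet c X - p`. -/
lemma choquet_repr {X : Ω → ℝ} (hX : Measurable X) {M p q : ℝ} (hM : 0 ≤ M)
    (hXM : ∀ ω, |X ω| ≤ M) (hp : p ≤ -M) (hq : M ≤ q) :
    ∫ x in p..q, c {ω | x < X ω} = choquet c X - p := by
  have hanti : Antitone (fun x => c {ω | x < X ω}) := antitone_G hc_mono hX
  have hint : ∀ a b : ℝ, IntervalIntegrable (fun x => c {ω | x < X ω}) volume a b :=
    fun a b => hanti.intervalIntegrable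
  have hp0 : p ≤ 0 := hp.trans (by linarith)
  have hq0 : (0:ℝ) ≤ q := hM.trans hq
  -- Iio part
  have h1 : (∫ x in Iio (0:ℝ), (c {ω | x < X ω} - 1)) = (∫ x in p..(0:ℝ), c {ω | x < X ω}) + p := by
    have hsplit : Iio (0:ℝ) = Iio p ∪ Ico p 0 := (Iio_union_Ico_eq_Iio hp0).symm
    have hzero : ∀ x ∈ Iio p, c {ω | x < X ω} - 1 = 0 := fun x hx => by
      rw [G_one hc_univ hXM (lt_of_lt_of_le hx hp)]; ring
    have hI1 : IntegrableOn (fun x => c {ω | x < X ω} - 1) (Iio p) volume := by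
      apply (integrableOn_congr_fun (fun x hx => (hzero x hx).symm) measurableSet_Iio).mp
      exact integrableOn_zero
    have hI2 : IntegrableOn (fun x => c {ω | x < X ω} - 1) (Ico p 0) volume := by
      have h : IntervalIntegrable (fun x => c {ω | x < X ω} - 1) volume p 0 :=
        (hint p 0).sub intervalIntegrable_const
      exact (intervalIntegrable_iff_integrableOn_Ico_of_le hp0).mp h
    have hdisj : Disjoint (Iio p) (Ico p (0:ℝ)) := by
      apply disjoint_left.mpr; intro x h1 h2; exact absurd h2.1 (not_le.mpr h1)
    rw [hsplit, setIntegral_union hdisj measurableSet_Ico hI1 hI2]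
    rw [setIntegral_congr_fun measurableSet_Iio hzero, integral_zero, zero_add]
    have heq : (∫ x in Ico p (0:ℝ), (c {ω | x < X ω} - 1))
        = ∫ x in p..(0:ℝ), (c {ω | x < X ω} - 1) := by
      rw [intervalIntegral.integral_of_le hp0, integral_Ioc_eq_integral_Ioo,
        ← integral_Ico_eq_integral_Ioo]
    rw [heq, intervalIntegral.integral_sub (hint p 0) intervalIntegrable_const,
      intervalIntegral.integral_const]
    simp only [smul_eq_mul, mul_one]; ring
  -- Ioi part
  have h2 : (∫ x in Ioi (0:ℝ), c {ω | x < X ω}) = ∫ x in (0:ℝ)..q, c {ω | x < X ω} := by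
    have hsplit : Ioi (0:ℝ) = Ioc 0 q ∪ Ioi q := (Ioc_union_Ioi_eq_Ioi hq0).symm
    have hzero : ∀ x ∈ Ioi q, c {ω | x < X ω} = 0 := fun x hx =>
      G_zero hc_empty hXM (hq.trans (le_of_lt hx))
    have hI2 : IntegrableOn (fun x => c {ω | x < X ω}) (Ioi q) volume := by
      apply (integrableOn_congr_fun (fun x hx => (hzero x hx).symm) measurableSet_Ioi).mp
      exact integrableOn_zero
    have hI1 : IntegrableOn (fun x => c {ω | x < X ω}) (Ioc 0 q) volume :=
      (intervalIntegrable_iff_integrableOn_Ioc_of_le hq0).mp (hint 0 q)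
    have hdisj : Disjoint (Ioc (0:ℝ) q) (Ioi q) := by
      apply disjoint_left.mpr; intro x h1 h2; exact absurd h1.2 (not_le.mpr h2)
    rw [hsplit, setIntegral_union hdisj measurableSet_Ioi hI1 hI2]
    rw [setIntegral_congr_fun measurableSet_Ioi hzero, integral_zero, add_zero]
    rw [intervalIntegral.integral_of_le hq0]
  rw [← intervalIntegral.integral_add_adjacent_intervals (hint p 0) (hint 0 q)]
  rw [choquet, h1, h2]; ring

include hc_mono hc_univ hc_empty in
lemma choquet_mono {X Y : Ω → ℝ} (hX : Measurable X) (hY : Measurable Y)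
    {M : ℝ} (hM : 0 ≤ M) (hXM : ∀ ω, |X ω| ≤ M) (hYM : ∀ ω, |Y ω| ≤ M)
    (hXY : ∀ ω, X ω ≤ Y ω) : choquet c X ≤ choquet c Y := by
  have hrX := choquet_repr hc_mono hc_empty hc_univ hX hM hXM (le_refl (-M)) le_rfl
  have hrY := choquet_repr hc_mono hc_empty hc_univ hY hM hYM (le_refl (-M)) le_rfl
  have : (∫ x in (-M)..M, c {ω | x < X ω}) ≤ ∫ x in (-M)..M, c {ω | x < Y ω} := by
    apply intervalIntegral.integral_mono_on (by linarith)
      (antitone_G hc_mono hX).intervalIntegrable (antitone_G hc_mono hY).intervalIntegrable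
    intro x _
    exact hc_mono (mble hX x) (mble hY x) (fun ω h => lt_of_lt_of_le h (hXY ω))
  linarith

include hc_mono hc_univ hc_empty in
lemma choquet_add_const {X : Ω → ℝ} (hX : Measurable X) {M : ℝ} (hM : 0 ≤ M)
    (hXM : ∀ ω, |X ω| ≤ M) (a : ℝ) :
    choquet c (fun ω => X ω + a) = choquet c X + a := by
  set L : ℝ := M + |a| with hL
  have hL0 : 0 ≤ L := by positivity
  have habs : ∀ ω, |X ω + a| ≤ L := fun ω => (abs_add_le _ _).trans (add_le_add_left (hXM ω) _)
  have hr1 := choquet_repr hc_mono hc_empty hc_univ (X := fun ω => X ω + a)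
    (hX.add_const a) hL0 habs (le_refl (-L)) le_rfl
  have hfun : (fun x : ℝ => c {ω | x < X ω + a}) = (fun x : ℝ => c {ω | x - a < X ω}) := by
    funext x; congr 1; ext ω; simp only [mem_setOf_eq]; constructor <;> intro h <;> linarith
  rw [hfun] at hr1
  have h3 := intervalIntegral.integral_comp_sub_right (a := -L) (b := L)
    (fun y : ℝ => c {ω | y < X ω}) a
  rw [h3] at hr1
  have hr2 := choquet_repr hc_mono hc_empty hc_univ hX hM hXM
    (p := -L - a) (q := L - a)
    (by rw [hL]; cases abs_cases a with
        | inl h => linarith [h.1]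
        | inr h => linarith [h.1])
    (by rw [hL]; cases abs_cases a with
        | inl h => linarith [h.1]
        | inr h => linarith [h.1])
  rw [hr2] at hr1
  linarith

include hc_empty hc_univ in
lemma choquet_zero : choquet c (fun _ => (0:ℝ)) = 0 := by
  have h1 : (∫ x in Iio (0:ℝ), (c {ω : Ω | x < (0:ℝ)} - 1)) = 0 := by
    rw [setIntegral_congr_fun measurableSet_Iio (g := fun _ => (0:ℝ))
      (fun x hx => by
        have hu : {ω : Ω | x < (0:ℝ)} = univ := eq_univ_of_forall fun ω => mem_Iio.mp hx
        simp [hu, hc_univ])]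
    exact integral_zero _ _
  have h2 : (∫ x in Ioi (0:ℝ), c {ω : Ω | x < (0:ℝ)}) = 0 := by
    rw [setIntegral_congr_fun measurableSet_Ioi (g := fun _ => (0:ℝ))
      (fun x hx => by
        have he : {ω : Ω | x < (0:ℝ)} = ∅ := eq_empty_of_forall_notMem fun ω h =>
          absurd (mem_Ioi.mp hx) (not_lt.mpr (le_of_lt h))
        rw [he, hc_empty])]
    exact integral_zero _ _
  rw [choquet, h1, h2]; ring

include hc_mono hc_univ hc_empty in
lemma choquet_smul {X : Ω → ℝ} (hX : Measurable X) {M : ℝ} (hM : 0 ≤ M)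
    (hXM : ∀ ω, |X ω| ≤ M) {a : ℝ} (ha : 0 ≤ a) :
    choquet c (fun ω => a * X ω) = a * choquet c X := by
  rcases eq_or_lt_of_le ha with rfl | hapos
  · simp only [zero_mul]
    rw [choquet_zero hc_empty hc_univ]
  · have hane : a ≠ 0 := ne_of_gt hapos
    have hM' : 0 ≤ a * M := by positivity
    have habs : ∀ ω, |a * X ω| ≤ a * M := fun ω => by
      rw [abs_mul, abs_of_pos hapos]; exact mul_le_mul_of_nonneg_left (hXM ω) ha
    have hr1 := choquet_repr hc_mono hc_empty hc_univ (X := fun ω => a * X ω)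
      (hX.const_mul a) hM' habs (le_refl (-(a*M))) le_rfl
    have hfun : (fun x : ℝ => c {ω | x < a * X ω}) = (fun x : ℝ => c {ω | x / a < X ω}) := by
      funext x; congr 1; ext ω; simp only [mem_setOf_eq]
      rw [div_lt_iff₀ hapos, mul_comm]
    rw [hfun] at hr1
    have h3 := intervalIntegral.integral_comp_div (a := -(a*M)) (b := a*M)
      (fun y : ℝ => c {ω | y < X ω}) hane
    have e2 : (a*M)/a = M := by rw [mul_comm a M, mul_div_assoc, div_self hane, mul_one]
    have e1 : -(a*M)/a = -M := by rw [neg_div, e2]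
    rw [e1, e2, smul_eq_mul] at h3
    rw [h3] at hr1
    have hr2 := choquet_repr hc_mono hc_empty hc_univ hX hM hXM (le_refl (-M)) le_rfl
    rw [hr2] at hr1
    linarith

lemma integral_const_on {f : ℝ → ℝ} {a b v : ℝ} (hab : a ≤ b)
    (hf : ∀ x ∈ Ioo a b, f x = v) :
    ∫ x in a..b, f x = (b - a) * v := by
  rw [intervalIntegral.integral_of_le hab, integral_Ioc_eq_integral_Ioo,
    setIntegral_congr_fun measurableSet_Ioo (fun x hx => hf x hx)]
  simp [Real.volume_Ioo, ENNReal.toReal_ofReal (sub_nonneg.mpr hab), hab]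

include hc_mono in
lemma antitone_capa {X : Ω → ℝ} (hX : Measurable X) {A : Set Ω} (hA : MeasurableSet A) :
    Antitone (fun x => c (A ∩ {ω | x < X ω})) := fun x y hxy =>
  hc_mono (hA.inter (mble hX y)) (hA.inter (mble hX x))
    (fun _ h => ⟨h.1, lt_of_le_of_lt hxy h.2⟩)

include hc_mono hc_univ hc_empty in
lemma choquet_step
    (hsub : ∀ A B : Set Ω, MeasurableSet A → MeasurableSet B →
      c (A ∪ B) + c (A ∩ B) ≤ c A + c B)
    {X : Ω → ℝ} (hX : Measurable X) {M : ℝ} (hM : 0 ≤ M) (hXM : ∀ ω, |X ω| ≤ M)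
    {A : Set Ω} (hA : MeasurableSet A) {t : ℝ} (ht : 0 ≤ t) :
    choquet c (fun ω => X ω + (if ω ∈ A then t else 0)) ≤ choquet c X + t * c A := by
  rcases eq_or_lt_of_le ht with rfl | htpos
  · have hfun : (fun ω => X ω + (if ω ∈ A then (0:ℝ) else 0)) = X := by
      funext ω; simp
    rw [hfun, zero_mul, add_zero]
  · set L : ℝ := M + t with hLdef
    have hL0 : 0 ≤ L := by positivity
    set Z : Ω → ℝ := fun ω => X ω + (if ω ∈ A then t else 0) with hZdef
    have hZ : Measurable Z := hX.add (Measurable.ite hA measurable_const measurable_const)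
    have hZL : ∀ ω, |Z ω| ≤ L := fun ω => by
      have : |(if ω ∈ A then t else 0)| ≤ t := by
        split_ifs <;> simp [abs_of_nonneg ht, ht]
      calc |Z ω| ≤ |X ω| + |(if ω ∈ A then t else 0)| := abs_add_le _ _
        _ ≤ M + t := add_le_add (hXM ω) this
    have hrZ := choquet_repr hc_mono hc_empty hc_univ hZ hL0 hZL (le_refl (-L)) le_rfl
    have hrX := choquet_repr hc_mono hc_empty hc_univ hX hM hXM
      (p := -L) (q := L) (by simp [hLdef]; linarith) (by simp [hLdef]; linarith)
    -- antitone families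
    have hantiX : Antitone (fun x => c {ω | x < X ω}) := antitone_G hc_mono hX
    have hantih : Antitone (fun x => c (A ∩ {ω | x < X ω})) := antitone_capa hc_mono hX hA
    have hantiht : Antitone (fun x => c (A ∩ {ω | x - t < X ω})) := fun x y hxy =>
      hantih (sub_le_sub_right hxy t)
    have hantiZ : Antitone (fun x => c {ω | x < Z ω}) := antitone_G hc_mono hZ
    -- pointwise bound
    have hpt : ∀ x : ℝ, c {ω | x < Z ω} ≤
        c {ω | x < X ω} + c (A ∩ {ω | x - t < X ω}) - c (A ∩ {ω | x < X ω}) := by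
      intro x
      have hset : {ω | x < Z ω} = {ω | x < X ω} ∪ (A ∩ {ω | x - t < X ω}) := by
        ext ω
        by_cases hω : ω ∈ A
        · simp only [hZdef, mem_setOf_eq, mem_union, mem_inter_iff, hω, if_true, true_and]
          constructor
          · intro h; right; linarith
          · rintro (h | h) <;> linarith
        · simp only [hZdef, mem_setOf_eq, mem_union, mem_inter_iff, hω, if_false, false_and,
            or_false, add_zero]
      have hcap : {ω | x < X ω} ∩ (A ∩ {ω | x - t < X ω}) = A ∩ {ω | x < X ω} := by
        ext ω; simp only [mem_inter_iff, mem_setOf_eq]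
        constructor
        · rintro ⟨h1, h2, h3⟩; exact ⟨h2, h1⟩
        · rintro ⟨h1, h2⟩; exact ⟨h2, h1, by linarith⟩
      have := hsub {ω | x < X ω} (A ∩ {ω | x - t < X ω}) (mble hX x)
        (hA.inter (mble hX (x - t)))
      rw [hcap] at this
      rw [hset]
      linarith
    -- integral of the correction term
    have hcorr : (∫ x in (-L)..L, c (A ∩ {ω | x - t < X ω}))
        = t * c A + ∫ x in (-L)..(L - t), c (A ∩ {ω | x < X ω}) := by
      have h3 := intervalIntegral.integral_comp_sub_right (a := -L) (b := L)
        (fun y : ℝ => c (A ∩ {ω | y < X ω})) t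
      rw [h3]
      have hord1 : -L - t ≤ -L := by linarith
      have hord2 : -L ≤ L - t := by simp [hLdef]; linarith
      rw [← intervalIntegral.integral_add_adjacent_intervals
        (a := -L - t) (b := -L) (c := L - t)
        hantih.intervalIntegrable hantih.intervalIntegrable]
      have hconst : (∫ x in (-L - t)..(-L), c (A ∩ {ω | x < X ω}))
          = (-L - (-L - t)) * c A := by
        apply integral_const_on hord1
        intro x hx
        have hxM : x < -M := by
          have := hx.2; simp only [hLdef] at this; linarith
        have hAA : A ∩ {ω | x < X ω} = A := by
          apply inter_eq_left.mpr
          intro ω _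
          exact lt_of_lt_of_le hxM (neg_le_of_abs_le (hXM ω))
        rw [hAA]
      rw [hconst]; ring_nf
    have htail : (∫ x in (-L)..L, c (A ∩ {ω | x < X ω}))
        = ∫ x in (-L)..(L-t), c (A ∩ {ω | x < X ω}) := by
      rw [← intervalIntegral.integral_add_adjacent_intervals
        (a := -L) (b := L - t) (c := L)
        hantih.intervalIntegrable hantih.intervalIntegrable]
      have : (∫ x in (L-t)..L, c (A ∩ {ω | x < X ω})) = (L - (L-t)) * 0 := by
        apply integral_const_on (by linarith)
        intro x hx
        have hxM : M < x := by
          have := hx.1; simp only [hLdef] at this; linarith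
        have : A ∩ {ω | x < X ω} = ∅ := by
          apply eq_empty_of_forall_notMem
          rintro ω ⟨_, h2⟩
          exact absurd (lt_trans hxM h2) (not_lt.mpr (le_of_abs_le (hXM ω)))
        rw [this, hc_empty]
      rw [this]; ring
    -- integrate the pointwise bound
    have hmain : (∫ x in (-L)..L, c {ω | x < Z ω}) ≤
        ∫ x in (-L)..L, (c {ω | x < X ω} + c (A ∩ {ω | x - t < X ω})
          - c (A ∩ {ω | x < X ω})) := by
      apply intervalIntegral.integral_mono_on (by linarith)
        hantiZ.intervalIntegrable
        ((hantiX.intervalIntegrable.add hantiht.intervalIntegrable).sub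
          hantih.intervalIntegrable)
      intro x _; exact hpt x
    rw [intervalIntegral.integral_sub (hantiX.intervalIntegrable.add
        hantiht.intervalIntegrable) hantih.intervalIntegrable,
      intervalIntegral.integral_add hantiX.intervalIntegrable
        hantiht.intervalIntegrable] at hmain
    rw [hrZ, hrX, hcorr, htail] at hmain
    linarith

include hc_mono hc_univ hc_empty in
lemma choquet_sum
    (hsub : ∀ A B : Set Ω, MeasurableSet A → MeasurableSet B →
      c (A ∪ B) + c (A ∩ B) ≤ c A + c B)
    {ε : ℝ} (hε : 0 ≤ ε) {B : ℕ → Set Ω} (hB : ∀ k, MeasurableSet (B k)) :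
    ∀ n : ℕ, ∀ X : Ω → ℝ, Measurable X → ∀ M : ℝ, 0 ≤ M → (∀ ω, |X ω| ≤ M) →
    choquet c (fun ω => X ω + ∑ k ∈ Finset.range n, (if ω ∈ B k then ε else 0)) ≤
      choquet c X + ∑ k ∈ Finset.range n, ε * c (B k) := by
  intro n
  induction n with
  | zero => intro X hX M hM hXM; simp
  | succ n ih =>
    intro X hX M hM hXM
    set X' : Ω → ℝ := fun ω => X ω + ∑ k ∈ Finset.range n, (if ω ∈ B k then ε else 0)
      with hX'def
    have hX' : Measurable X' := by
      apply hX.add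
      apply Finset.measurable_sum
      intro k _
      exact Measurable.ite (hB k) measurable_const measurable_const
    have hX'M : ∀ ω, |X' ω| ≤ M + n * ε := by
      intro ω
      have h1 : |∑ k ∈ Finset.range n, (if ω ∈ B k then ε else 0)| ≤ n * ε := by
        calc |∑ k ∈ Finset.range n, (if ω ∈ B k then ε else 0)|
            ≤ ∑ k ∈ Finset.range n, |if ω ∈ B k then ε else 0| :=
              Finset.abs_sum_le_sum_abs _ _
          _ ≤ ∑ _k ∈ Finset.range n, ε := by
              apply Finset.sum_le_sum
              intro k _
              split_ifs <;> simp [abs_of_nonneg hε, hε]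
          _ = n * ε := by simp [mul_comm]
      calc |X' ω| ≤ |X ω| + _ := abs_add_le _ _
        _ ≤ M + n * ε := add_le_add (hXM ω) h1
    have hM' : (0:ℝ) ≤ M + n * ε := by positivity
    have hfun : (fun ω => X ω + ∑ k ∈ Finset.range (n+1), (if ω ∈ B k then ε else 0))
        = fun ω => X' ω + (if ω ∈ B n then ε else 0) := by
      funext ω; rw [hX'def]; simp only [Finset.sum_range_succ]; ring
    rw [hfun, Finset.sum_range_succ]
    calc choquet c (fun ω => X' ω + (if ω ∈ B n then ε else 0))
        ≤ choquet c X' + ε * c (B n) :=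
          choquet_step hc_mono hc_empty hc_univ hsub hX' hM' hX'M (hB n) hε
      _ ≤ (choquet c X + ∑ k ∈ Finset.range n, ε * c (B k)) + ε * c (B n) := by
          have := ih X hX M hM hXM
          linarith
      _ = choquet c X + (∑ k ∈ Finset.range n, ε * c (B k) + ε * c (B n)) := by ring

include hc_mono hc_univ hc_empty hc_range in
lemma choquet_subadd_nonneg
    (hsub : ∀ A B : Set Ω, MeasurableSet A → MeasurableSet B →
      c (A ∪ B) + c (A ∩ B) ≤ c A + c B)
    {X Y : Ω → ℝ} (hX : Measurable X) (hY : Measurable Y)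
    {MX MY : ℝ} (hMX0 : 0 ≤ MX) (hMY0 : 0 ≤ MY)
    (hXM : ∀ ω, |X ω| ≤ MX) (hYM : ∀ ω, |Y ω| ≤ MY) (hY0 : ∀ ω, 0 ≤ Y ω) :
    choquet c (fun ω => X ω + Y ω) ≤ choquet c X + choquet c Y := by
  apply le_of_forall_pos_le_add
  intro ε hε
  obtain ⟨m, hm⟩ := exists_nat_one_div_lt hε
  set δ : ℝ := 1 / ((m : ℝ) + 1) with hδdef
  have hδpos : 0 < δ := by positivity
  set N : ℕ := ⌈MY / δ⌉₊ with hNdef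
  set B : ℕ → Set Ω := fun k => {ω | ((k : ℝ) + 1) * δ < Y ω} with hBdef
  have hBmeas : ∀ k, MeasurableSet (B k) := fun k => mble hY _
  set S : Ω → ℝ := fun ω => ∑ k ∈ Finset.range N, (if ω ∈ B k then δ else 0) with hSdef
  have hSmeas : Measurable S := Finset.measurable_sum _ fun k _ =>
    Measurable.ite (hBmeas k) measurable_const measurable_const
  have hS0 : ∀ ω, 0 ≤ S ω := fun ω =>
    Finset.sum_nonneg fun k _ => by split_ifs <;> simp [le_of_lt hδpos]
  have hSle : ∀ ω, S ω ≤ N * δ := fun ω => by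
    calc S ω ≤ ∑ _k ∈ Finset.range N, δ := by
          apply Finset.sum_le_sum; intro k _; split_ifs <;> simp [le_of_lt hδpos]
      _ = N * δ := by simp [mul_comm]
  -- Claim 1 : Y ≤ S + δ
  have hclaim1 : ∀ ω, Y ω ≤ S ω + δ := by
    intro ω
    set z : ℝ := Y ω / δ with hzdef
    have hz0 : 0 ≤ z := div_nonneg (hY0 ω) (le_of_lt hδpos)
    rcases Nat.eq_zero_or_pos ⌈z⌉₊ with h0 | hpos
    · have hz : z ≤ 0 := Nat.ceil_eq_zero.mp h0
      have hzY : z * δ = Y ω := by rw [hzdef]; field_simp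
      nlinarith [hS0 ω, hδpos]
    · set j : ℕ := ⌈z⌉₊ - 1 with hjdef
      have hj1 : j + 1 = ⌈z⌉₊ := Nat.succ_pred_eq_of_pos hpos
      have hjN : j < N := by
        have h1 : ⌈z⌉₊ ≤ N := by
          apply Nat.ceil_le_ceil
          rw [hzdef]
          gcongr
          exact le_of_abs_le (hYM ω)
        omega
      have hsub1 : ∀ k ∈ Finset.range j, (if ω ∈ B k then δ else 0) = δ := by
        intro k hk
        have hkj : k < j := Finset.mem_range.mp hk
        have hcast : (k : ℝ) + 1 ≤ (j : ℝ) := by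
          have : k + 1 ≤ j := hkj
          exact_mod_cast this
        have hceil : ((⌈z⌉₊ : ℝ)) < z + 1 := Nat.ceil_lt_add_one hz0
        have hjz : (j : ℝ) < z := by
          have : ((j : ℝ)) + 1 = (⌈z⌉₊ : ℝ) := by exact_mod_cast congrArg Nat.cast hj1
          linarith
        have : ((k : ℝ) + 1) * δ < Y ω := by
          have hzY : z * δ = Y ω := by
            rw [hzdef]; field_simp
          calc ((k : ℝ) + 1) * δ ≤ (j : ℝ) * δ := by nlinarith
            _ < z * δ := by nlinarith
            _ = Y ω := hzY
        simp [hBdef, this]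
      have hgeq : (j : ℝ) * δ ≤ S ω := by
        calc (j : ℝ) * δ = ∑ k ∈ Finset.range j, (if ω ∈ B k then δ else 0) := by
              rw [Finset.sum_congr rfl hsub1]; simp [mul_comm]
          _ ≤ S ω := by
              apply Finset.sum_le_sum_of_subset_of_nonneg
              · exact Finset.range_subset_range.mpr (le_of_lt hjN)
              · intro k _ _; split_ifs <;> simp [le_of_lt hδpos]
      have hzj : z ≤ (j : ℝ) + 1 := by
        have : ((j : ℝ)) + 1 = (⌈z⌉₊ : ℝ) := by exact_mod_cast congrArg Nat.cast hj1
        rw [this]; exact Nat.le_ceil z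
      have hzY : z * δ = Y ω := by rw [hzdef]; field_simp
      nlinarith
  -- Claim 2 : δ ∑ c(B k) ≤ choquet Y
  have hclaim2 : ∑ k ∈ Finset.range N, δ * c (B k) ≤ choquet c Y := by
    have hanti : Antitone (fun x => c {ω | x < Y ω}) := antitone_G hc_mono hY
    set a : ℕ → ℝ := fun k => k * δ with hadef
    have hsum : ∑ k ∈ Finset.range N, ∫ x in (a k)..(a (k+1)), c {ω | x < Y ω}
        = ∫ x in (a 0)..(a N), c {ω | x < Y ω} :=
      intervalIntegral.sum_integral_adjacent_intervals fun k _ => hanti.intervalIntegrable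
    have hterm : ∀ k ∈ Finset.range N, δ * c (B k) ≤ ∫ x in (a k)..(a (k+1)), c {ω | x < Y ω} := by
      intro k _
      have hle : a k ≤ a (k+1) := by
        simp only [hadef]; push_cast; nlinarith
      have hmono : ∀ x ∈ Icc (a k) (a (k+1)), c (B k) ≤ c {ω | x < Y ω} := by
        intro x hx
        apply hc_mono (hBmeas k) (mble hY x)
        intro ω hω
        have : x ≤ ((k:ℝ)+1) * δ := by
          have := hx.2; simp only [hadef] at this; push_cast at this; linarith
        exact lt_of_le_of_lt this hω
      have := intervalIntegral.integral_mono_on (μ := volume) hle intervalIntegrable_const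
        hanti.intervalIntegrable hmono
      rw [intervalIntegral.integral_const, smul_eq_mul] at this
      have heq : (a (k+1) - a k) = δ := by simp only [hadef]; push_cast; ring
      rw [heq] at this
      linarith
    have h1 : ∑ k ∈ Finset.range N, δ * c (B k) ≤ ∫ x in (a 0)..(a N), c {ω | x < Y ω} := by
      rw [← hsum]; exact Finset.sum_le_sum hterm
    have ha0 : a 0 = 0 := by simp [hadef]
    have haN : a N = N * δ := rfl
    rw [ha0, haN] at h1
    -- now show ∫_0^{Nδ} ≤ choquet Y
    set L : ℝ := MY + N * δ with hLdef
    have hL0 : 0 ≤ L := by positivity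
    have hNδ : 0 ≤ (N:ℝ) * δ := by positivity
    have hrY := choquet_repr hc_mono hc_empty hc_univ hY (M := MY) hMY0 hYM
      (p := -L) (q := L) (by simp only [hLdef]; linarith) (by simp only [hLdef]; linarith)
    have hsplit1 : (∫ x in (-L)..(0:ℝ), c {ω | x < Y ω}) = (0 - (-L)) * 1 := by
      apply integral_const_on (by linarith)
      intro x hx
      have : {ω | x < Y ω} = univ := eq_univ_of_forall fun ω =>
        lt_of_lt_of_le hx.2 (hY0 ω)
      rw [this, hc_univ]
    have hsplit3 : (0:ℝ) ≤ ∫ x in ((N:ℝ)*δ)..L, c {ω | x < Y ω} := by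
      apply intervalIntegral.integral_nonneg (by simp only [hLdef]; linarith)
      intro u _
      exact (hc_range _ (mble hY u)).1
    have hadd1 := intervalIntegral.integral_add_adjacent_intervals
      (a := -L) (b := 0) (c := (N:ℝ)*δ) (f := fun x => c {ω | x < Y ω})
      (μ := volume) hanti.intervalIntegrable hanti.intervalIntegrable
    have hadd2 := intervalIntegral.integral_add_adjacent_intervals
      (a := -L) (b := (N:ℝ)*δ) (c := L) (f := fun x => c {ω | x < Y ω})
      (μ := volume) hanti.intervalIntegrable hanti.intervalIntegrable
    have : (∫ x in (0:ℝ)..((N:ℝ)*δ), c {ω | x < Y ω}) ≤ choquet c Y := by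
      nlinarith [hsplit1, hsplit3, hadd1, hadd2, hrY]
    linarith
  -- Assemble
  have hXS : Measurable (fun ω => X ω + S ω) := hX.add hSmeas
  have hcommon : ∀ ω, |X ω + Y ω| ≤ MX + MY + N * δ + δ := fun ω => by
    have := abs_add_le (X ω) (Y ω)
    have h2 : (0:ℝ) ≤ N * δ := by positivity
    have := hXM ω; have := hYM ω
    nlinarith [le_of_lt hδpos]
  have hcommon2 : ∀ ω, |X ω + S ω + δ| ≤ MX + MY + N * δ + δ := fun ω => by
    have h1 : |X ω + S ω + δ| ≤ |X ω + S ω| + |δ| := abs_add_le _ _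
    have h1b : |X ω + S ω| ≤ |X ω| + |S ω| := abs_add_le _ _
    have h2 : |S ω| = S ω := abs_of_nonneg (hS0 ω)
    have h3 : |δ| = δ := abs_of_pos hδpos
    have := hXM ω; have := hSle ω
    nlinarith [hMY0]
  have hMbig : (0:ℝ) ≤ MX + MY + N * δ + δ := by positivity
  have hmono1 : choquet c (fun ω => X ω + Y ω) ≤ choquet c (fun ω => X ω + S ω + δ) := by
    apply choquet_mono hc_mono hc_empty hc_univ (hX.add hY) ((hX.add hSmeas).add_const δ)
      hMbig hcommon hcommon2
    intro ω
    have := hclaim1 ω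
    show X ω + Y ω ≤ X ω + S ω + δ
    linarith
  have hXSbound : ∀ ω, |X ω + S ω| ≤ MX + N * δ := fun ω => by
    have h1 : |X ω + S ω| ≤ |X ω| + |S ω| := abs_add_le _ _
    have h2 : |S ω| = S ω := abs_of_nonneg (hS0 ω)
    have := hXM ω; have := hSle ω
    linarith
  have hMXS : (0:ℝ) ≤ MX + N * δ := by positivity
  have hshift : choquet c (fun ω => X ω + S ω + δ) = choquet c (fun ω => X ω + S ω) + δ :=
    choquet_add_const hc_mono hc_empty hc_univ hXS hMXS hXSbound δ
  have hsumle : choquet c (fun ω => X ω + S ω) ≤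
      choquet c X + ∑ k ∈ Finset.range N, δ * c (B k) := by
    have h := choquet_sum hc_mono hc_empty hc_univ hsub (le_of_lt hδpos) hBmeas N X hX MX hMX0 hXM
    simp only [hSdef]
    exact h
  have : choquet c (fun ω => X ω + Y ω) ≤ choquet c X + choquet c Y + δ := by
    linarith [hmono1, hshift, hsumle, hclaim2]
  have hδε : δ < ε := by rw [hδdef]; exact hm
  linarith

include hc_mono hc_univ hc_empty hc_range in
lemma choquet_subadd
    (hsub : ∀ A B : Set Ω, MeasurableSet A → MeasurableSet B →
      c (A ∪ B) + c (A ∩ B) ≤ c A + c B)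
    {X Y : Ω → ℝ} (hX : Measurable X) (hY : Measurable Y)
    {MX MY : ℝ} (hMX0 : 0 ≤ MX) (hMY0 : 0 ≤ MY)
    (hXM : ∀ ω, |X ω| ≤ MX) (hYM : ∀ ω, |Y ω| ≤ MY) :
    choquet c (fun ω => X ω + Y ω) ≤ choquet c X + choquet c Y := by
  set Y' : Ω → ℝ := fun ω => Y ω + MY with hY'def
  have hY' : Measurable Y' := hY.add_const MY
  have hY'0 : ∀ ω, 0 ≤ Y' ω := fun ω => by
    have := neg_le_of_abs_le (hYM ω); simp only [hY'def]; linarith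
  have hY'M : ∀ ω, |Y' ω| ≤ 2 * MY := fun ω => by
    have h1 := abs_add_le (Y ω) MY
    have h2 : |MY| = MY := abs_of_nonneg hMY0
    have := hYM ω
    simp only [hY'def]; nlinarith
  have h1 : choquet c (fun ω => X ω + Y' ω) ≤ choquet c X + choquet c Y' :=
    choquet_subadd_nonneg hc_mono hc_range hc_empty hc_univ hsub hX hY' hMX0
      (by linarith) hXM hY'M hY'0
  have h2 : choquet c Y' = choquet c Y + MY :=
    choquet_add_const hc_mono hc_empty hc_univ hY hMY0 hYM MY
  have h3 : choquet c (fun ω => X ω + Y' ω)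
      = choquet c (fun ω => X ω + Y ω) + MY := by
    have hfun : (fun ω => X ω + Y' ω) = fun ω => (X ω + Y ω) + MY := by
      funext ω; simp only [hY'def]; ring
    rw [hfun]
    exact choquet_add_const hc_mono hc_empty hc_univ (hX.add hY) (M := MX + MY)
      (by linarith)
      (fun ω => calc |X ω + Y ω| ≤ |X ω| + |Y ω| := abs_add_le _ _
        _ ≤ MX + MY := add_le_add (hXM ω) (hYM ω)) MY
  linarith

include hc_mono hc_univ hc_empty in
lemma choquet_indicator {A : Set Ω} (hA : MeasurableSet A) :
    choquet c (fun ω => if ω ∈ A then (1:ℝ) else 0) = c A := by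
  set X : Ω → ℝ := fun ω => if ω ∈ A then (1:ℝ) else 0 with hXdef
  have hX : Measurable X := Measurable.ite hA measurable_const measurable_const
  have hb : ∀ ω, |X ω| ≤ 1 := fun ω => by
    simp only [hXdef]; split_ifs <;> norm_num
  have hanti : Antitone (fun x => c {ω | x < X ω}) := antitone_G hc_mono hX
  have hr := choquet_repr hc_mono hc_empty hc_univ hX (M := 1) (by norm_num) hb
    (p := -1) (q := 1) le_rfl le_rfl
  have hadd := intervalIntegral.integral_add_adjacent_intervals
    (a := (-1:ℝ)) (b := 0) (c := 1) (f := fun x => c {ω | x < X ω})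
    (μ := volume) hanti.intervalIntegrable hanti.intervalIntegrable
  have hp1 : (∫ x in (-1:ℝ)..0, c {ω | x < X ω}) = (0 - (-1)) * 1 := by
    apply integral_const_on (by norm_num)
    intro x hx
    have : {ω | x < X ω} = univ := eq_univ_of_forall fun ω => by
      have : (0:ℝ) ≤ X ω := by simp only [hXdef]; split_ifs <;> norm_num
      exact lt_of_lt_of_le hx.2 this
    rw [this, hc_univ]
  have hp2 : (∫ x in (0:ℝ)..1, c {ω | x < X ω}) = (1 - 0) * c A := by
    apply integral_const_on (by norm_num)
    intro x hx
    congr 1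
    ext ω
    simp only [hXdef, mem_setOf_eq]
    by_cases hω : ω ∈ A
    · simp only [hω, if_true, iff_true]; exact hx.2
    · simp only [hω, if_false, iff_false]; exact not_lt.mpr (le_of_lt hx.1)
  rw [← hadd] at hr
  linarith [hp1, hp2, hr]

include hc_mono hc_range hc_empty hc_univ in
theorem choquet_convex_iff_submodular' :
    (∀ A B : Set Ω, MeasurableSet A → MeasurableSet B →
        c (A ∪ B) + c (A ∩ B) ≤ c A + c B) ↔
    (∀ X Y : Ω → ℝ, Measurable X → Measurable Y →
        (∃ M, ∀ ω, |X ω| ≤ M) → (∃ M, ∀ ω, |Y ω| ≤ M) →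
        ∀ l : ℝ, l ∈ Set.Icc (0 : ℝ) 1 →
          choquet c (fun ω => l * X ω + (1 - l) * Y ω) ≤
            l * choquet c X + (1 - l) * choquet c Y) := by
  constructor
  · rintro hsub X Y hX hY ⟨MX, hXM⟩ ⟨MY, hYM⟩ l ⟨hl0, hl1⟩
    set MX' : ℝ := max MX 0 with hMX'def
    set MY' : ℝ := max MY 0 with hMY'def
    have hMX'0 : (0:ℝ) ≤ MX' := le_max_right _ _
    have hMY'0 : (0:ℝ) ≤ MY' := le_max_right _ _
    have hXM' : ∀ ω, |X ω| ≤ MX' := fun ω => (hXM ω).trans (le_max_left _ _)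
    have hYM' : ∀ ω, |Y ω| ≤ MY' := fun ω => (hYM ω).trans (le_max_left _ _)
    have hlX : ∀ ω, |l * X ω| ≤ MX' := fun ω => by
      rw [abs_mul, abs_of_nonneg hl0]
      nlinarith [hXM' ω, abs_nonneg (X ω)]
    have hlY : ∀ ω, |(1 - l) * Y ω| ≤ MY' := fun ω => by
      rw [abs_mul, abs_of_nonneg (by linarith : (0:ℝ) ≤ 1 - l)]
      nlinarith [hYM' ω, abs_nonneg (Y ω)]
    have h1 : choquet c (fun ω => l * X ω + (1 - l) * Y ω) ≤
        choquet c (fun ω => l * X ω) + choquet c (fun ω => (1 - l) * Y ω) :=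
      choquet_subadd hc_mono hc_range hc_empty hc_univ hsub
        (hX.const_mul l) (hY.const_mul (1 - l)) hMX'0 hMY'0 hlX hlY
    have h2 : choquet c (fun ω => l * X ω) = l * choquet c X :=
      choquet_smul hc_mono hc_empty hc_univ hX hMX'0 hXM' hl0
    have h3 : choquet c (fun ω => (1 - l) * Y ω) = (1 - l) * choquet c Y :=
      choquet_smul hc_mono hc_empty hc_univ hY hMY'0 hYM' (by linarith)
    linarith
  · intro hconv A B hA hB
    set X : Ω → ℝ := fun ω => if ω ∈ A then (1:ℝ) else 0 with hXdef
    set Y : Ω → ℝ := fun ω => if ω ∈ B then (1:ℝ) else 0 with hYdef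
    have hXm : Measurable X := Measurable.ite hA measurable_const measurable_const
    have hYm : Measurable Y := Measurable.ite hB measurable_const measurable_const
    have hbX : ∀ ω, |X ω| ≤ 1 := fun ω => by
      simp only [hXdef]; split_ifs <;> norm_num
    have hbY : ∀ ω, |Y ω| ≤ 1 := fun ω => by
      simp only [hYdef]; split_ifs <;> norm_num
    have hXv : choquet c X = c A := choquet_indicator hc_mono hc_empty hc_univ hA
    have hYv : choquet c Y = c B := choquet_indicator hc_mono hc_empty hc_univ hB
    have h := hconv X Y hXm hYm ⟨1, hbX⟩ ⟨1, hbY⟩ (1/2) ⟨by norm_num, by norm_num⟩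
    -- compute choquet of the half-sum
    set Z : Ω → ℝ := fun ω => (1/2 : ℝ) * X ω + (1 - (1/2:ℝ)) * Y ω with hZdef
    have hZm : Measurable Z := (hXm.const_mul _).add (hYm.const_mul _)
    have hZ0 : ∀ ω, 0 ≤ Z ω := fun ω => by
      simp only [hZdef, hXdef, hYdef]; split_ifs <;> norm_num
    have hZb : ∀ ω, |Z ω| ≤ 1 := fun ω => by
      simp only [hZdef, hXdef, hYdef]; split_ifs <;> norm_num [abs_le]
    have hanti : Antitone (fun x => c {ω | x < Z ω}) := antitone_G hc_mono hZm
    have hr := choquet_repr hc_mono hc_empty hc_univ hZm (M := 1) (by norm_num) hZb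
      (p := -1) (q := 1) le_rfl le_rfl
    have haddA := intervalIntegral.integral_add_adjacent_intervals
      (a := (-1:ℝ)) (b := 0) (c := 1) (f := fun x => c {ω | x < Z ω})
      (μ := volume) hanti.intervalIntegrable hanti.intervalIntegrable
    have haddB := intervalIntegral.integral_add_adjacent_intervals
      (a := (0:ℝ)) (b := 1/2) (c := 1) (f := fun x => c {ω | x < Z ω})
      (μ := volume) hanti.intervalIntegrable hanti.intervalIntegrable
    have hP1 : (∫ x in (-1:ℝ)..0, c {ω | x < Z ω}) = (0 - (-1)) * 1 := by
      apply integral_const_on (by norm_num)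
      intro x hx
      have : {ω | x < Z ω} = univ := eq_univ_of_forall fun ω =>
        lt_of_lt_of_le hx.2 (hZ0 ω)
      rw [this, hc_univ]
    have hP2 : (∫ x in (0:ℝ)..(1/2), c {ω | x < Z ω}) = (1/2 - 0) * c (A ∪ B) := by
      apply integral_const_on (by norm_num)
      intro x hx
      congr 1
      ext ω
      by_cases hωA : ω ∈ A <;> by_cases hωB : ω ∈ B <;>
        simp only [hZdef, hXdef, hYdef, mem_setOf_eq, mem_union, hωA, hωB,
          if_true, if_false, iff_true, iff_false, true_or, or_true, or_self] <;>
        norm_num <;>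
        first
          | linarith [hx.1, hx.2]
          | (constructor <;> intro <;> linarith [hx.1, hx.2])
    have hP3 : (∫ x in (1/2:ℝ)..1, c {ω | x < Z ω}) = (1 - 1/2) * c (A ∩ B) := by
      apply integral_const_on (by norm_num)
      intro x hx
      congr 1
      ext ω
      by_cases hωA : ω ∈ A <;> by_cases hωB : ω ∈ B <;>
        simp only [hZdef, hXdef, hYdef, mem_setOf_eq, mem_inter_iff, hωA, hωB,
          if_true, if_false, iff_true, iff_false, true_and, and_true, false_and, and_false] <;>
        norm_num <;>
        first
          | linarith [hx.1, hx.2]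
          | (constructor <;> intro <;> linarith [hx.1, hx.2])
    have hZv : choquet c Z = (c (A ∪ B) + c (A ∩ B)) / 2 := by
      rw [← haddB] at haddA
      rw [← haddA] at hr
      linarith [hP1, hP2, hP3]
    rw [hXv, hYv, hZv] at h
    linarith

end Aux

/-- A monotone normalized set function `c` is submodular iff its Choquet integral is
convex on the space of bounded Borel-measurable functions. -/
theorem choquet_convex_iff_submodular {Ω : Type*} [MeasurableSpace Ω] (c : Set Ω → ℝ)
    (hc_mono : ∀ ⦃A B : Set Ω⦄, MeasurableSet A → MeasurableSet B → A ⊆ B → c A ≤ c B)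
    (hc_range : ∀ A : Set Ω, MeasurableSet A → c A ∈ Set.Icc (0 : ℝ) 1)
    (hc_empty : c ∅ = 0) (hc_univ : c Set.univ = 1) :
    (∀ A B : Set Ω, MeasurableSet A → MeasurableSet B →
        c (A ∪ B) + c (A ∩ B) ≤ c A + c B) ↔
    (∀ X Y : Ω → ℝ, Measurable X → Measurable Y →
        (∃ M, ∀ ω, |X ω| ≤ M) → (∃ M, ∀ ω, |Y ω| ≤ M) →
        ∀ l : ℝ, l ∈ Set.Icc (0 : ℝ) 1 →
          choquet c (fun ω => l * X ω + (1 - l) * Y ω) ≤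
            l * choquet c X + (1 - l) * choquet c Y) := by
  exact choquet_convex_iff_submodular' hc_mono hc_range hc_empty hc_univ
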